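/- arXiv:2411.00250 — 3 statements merged into one kernel-verified Lean document; each statement's English description precedes it below -/
import Mathlib

section
/- For all integers d ≥ 0 and n ≥ d + 1, the rank over ℝ of the matrix W_{n,d} equals C(n−1, d). -/
open Matrix Polynomial

/-- `S(G)`: real symmetric matrices whose off-diagonal zero/nonzero pattern
matches the adjacency of `G`; the diagonal is unconstrained. -/
def Sset {V : Type*} [Fintype V] [DecidableEq V] (G : SimpleGraph V) : Set (Matrix V V ℝ) :=
  {M | M.IsSymm ∧ ∀ u v : V, u ≠ v → (M u v ≠ 0 ↔ G.Adj u v)}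

/-- `q(G)`: the minimum number of distinct eigenvalues over matrices in `S(G)`. -/
noncomputable def minQ {V : Type*} [Fintype V] [DecidableEq V] (G : SimpleGraph V) : ℕ :=
  sInf {k : ℕ | ∃ M ∈ Sset G, (spectrum ℝ M).ncard = k}

/-- The Johnson graph `J(n,d)`: vertices are the `d`-element subsets of an `n`-set,
adjacent iff their symmetric difference has two elements. -/
def Johnson (n d : ℕ) : SimpleGraph {s : Finset (Fin n) // s.card = d} where
  Adj α β := (symmDiff α.1 β.1).card = 2
  symm := by constructor; intro a b h; rwa [symmDiff_comm]
  loopless := by constructor; intro a h; simp [symmDiff_self] at h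

/-- For `d`-subsets `α, β` with `α ∆ β = {i, j}`, `i < j`, this is
`h(α,β) = |{ℓ ∈ α ∩ β : i < ℓ < j}|`. -/
def hjExp {n : ℕ} (α β : Finset (Fin n)) : ℕ :=
  ((α ∩ β).filter (fun l => (∃ i ∈ symmDiff α β, i < l) ∧ ∃ j ∈ symmDiff α β, l < j)).card

/-- The signed adjacency matrix `A_{n,d}` of the Johnson graph `J(n,d)`:
`A(α,β) = (-1)^{h(α,β)}` when `|α ∆ β| = 2` and `0` otherwise. -/
def Ajohnson (n d : ℕ) :
    Matrix {s : Finset (Fin n) // s.card = d} {s : Finset (Fin n) // s.card = d} ℝ :=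
  fun α β => if (symmDiff α.1 β.1).card = 2 then (-1 : ℝ) ^ hjExp α.1 β.1 else 0

/-- The matrix `W_{n,d}`, rows indexed by `d`-subsets and columns by `(d+1)`-subsets of
an `n`-set: `W(α,β) = (-1)^{|{y ∈ β : y < x}|}` when `α ⊆ β` with `β \ α = {x}`, else `0`. -/
def Wj (n d : ℕ) :
    Matrix {s : Finset (Fin n) // s.card = d} {s : Finset (Fin n) // s.card = d + 1} ℝ :=
  fun α β => if α.1 ⊆ β.1 then
      (-1 : ℝ) ^ ((β.1.filter (fun y => ∃ x ∈ β.1 \ α.1, y < x)).card)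
    else 0

/-- `P_{n,d} := W_{n,d} · W_{n,d}ᵀ`. -/
noncomputable def Pj (n d : ℕ) := Wj n d * (Wj n d)ᵀ

namespace Stmt7

lemma Wj_apply_zero {n d : ℕ} (α : {s : Finset (Fin n) // s.card = d})
    (β : {s : Finset (Fin n) // s.card = d + 1}) (h : ¬ α.1 ⊆ β.1) :
    Wj n d α β = 0 := if_neg h

lemma Wj_apply {n d : ℕ} (α : {s : Finset (Fin n) // s.card = d})
    (β : {s : Finset (Fin n) // s.card = d + 1}) (x : Fin n) (hx : x ∉ α.1)
    (hβ : β.1 = insert x α.1) :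
    Wj n d α β = (-1 : ℝ) ^ ((α.1.filter (· < x)).card) := by
  have hsub : α.1 ⊆ β.1 := hβ ▸ Finset.subset_insert x α.1
  have hsd : β.1 \ α.1 = {x} := by
    rw [hβ]
    ext z
    simp only [Finset.mem_sdiff, Finset.mem_insert, Finset.mem_singleton]
    constructor
    · rintro ⟨h1 | h1, h2⟩ <;> tauto
    · rintro rfl; exact ⟨Or.inl rfl, hx⟩
  have hfil : (β.1.filter (fun y => ∃ z ∈ β.1 \ α.1, y < z)) = α.1.filter (· < x) := by
    rw [hsd, hβ]
    ext z
    simp only [Finset.mem_filter, Finset.mem_insert, Finset.mem_singleton, exists_eq_left]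
    constructor
    · rintro ⟨h1 | h1, h2⟩
      · exact absurd h2 (by simp [h1])
      · exact ⟨h1, h2⟩
    · rintro ⟨h1, h2⟩; exact ⟨Or.inr h1, h2⟩
  rw [Wj, if_pos hsub, hfil]

lemma rank_submatrix_le' {m n p q : Type*} [Fintype m] [Fintype n] [Fintype p] [Fintype q]
    [DecidableEq m] [DecidableEq n] [DecidableEq p] [DecidableEq q]
    (A : Matrix m n ℝ) (f : p → m) (g : q → n) : (A.submatrix f g).rank ≤ A.rank := by
  have h1 : (Matrix.of fun (i : p) (j : m) => if f i = j then (1:ℝ) else 0) * A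
      = A.submatrix f id := by
    ext i s
    simp [Matrix.mul_apply, ite_mul, Finset.sum_ite_eq]
  have h2 : A.submatrix f id * (Matrix.of fun (i : n) (j : q) => if i = g j then (1:ℝ) else 0)
      = A.submatrix f g := by
    ext i s
    simp [Matrix.mul_apply, mul_ite, Finset.sum_ite_eq']
  calc (A.submatrix f g).rank = ((Matrix.of fun (i : p) (j : m) => if f i = j then (1:ℝ) else 0) * A
        * (Matrix.of fun (i : n) (j : q) => if i = g j then (1:ℝ) else 0)).rank := by rw [h1, h2]
    _ ≤ (A.submatrix f id).rank := by rw [h1]; exact Matrix.rank_mul_le_left _ _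
    _ ≤ A.rank := by
        have := Matrix.rank_mul_le_right
          (Matrix.of fun (i : p) (j : m) => if f i = j then (1:ℝ) else 0) A
        rw [h1] at this; exact this

lemma lower (n d : ℕ) (hn : d + 1 ≤ n) : (n - 1).choose d ≤ (Wj n d).rank := by
  classical
  have hn1 : 0 < n := by omega
  set x0 : Fin n := ⟨0, hn1⟩ with hx0
  let U := {s : Finset (Fin n) // s.card = d ∧ x0 ∉ s}
  let fr : U → {s : Finset (Fin n) // s.card = d} := fun u => ⟨u.1, u.2.1⟩
  let fc : U → {s : Finset (Fin n) // s.card = d + 1} := fun u =>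
    ⟨insert x0 u.1, by rw [Finset.card_insert_of_notMem u.2.2, u.2.1]⟩
  have hM : (Wj n d).submatrix fr fc = (1 : Matrix U U ℝ) := by
    ext u v
    by_cases huv : u = v
    · subst huv
      rw [Matrix.submatrix_apply, Wj_apply (fr u) (fc u) x0 u.2.2 rfl]
      have : u.1.filter (· < x0) = ∅ := by
        apply Finset.filter_false_of_mem
        intro z _
        simp [hx0, Fin.lt_def]
      change (-1 : ℝ) ^ (u.1.filter (· < x0)).card = (1 : Matrix U U ℝ) u u
      simp [this]
    · rw [Matrix.submatrix_apply, Wj_apply_zero, Matrix.one_apply_ne huv]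
      intro hsub
      have h1 : u.1 ⊆ v.1 := by
        intro z hz
        rcases Finset.mem_insert.mp (hsub hz) with h | h
        · exact absurd (h ▸ hz) u.2.2
        · exact h
      have : u.1 = v.1 := Finset.eq_of_subset_of_card_le h1 (by rw [u.2.1, v.2.1])
      exact huv (Subtype.ext this)
  have hr : ((Wj n d).submatrix fr fc).rank = Fintype.card U := by
    rw [hM, Matrix.rank_one]
  have hcard : Fintype.card U = (n - 1).choose d := by
    rw [Fintype.card_subtype]
    have : (Finset.univ.filter (fun s : Finset (Fin n) => s.card = d ∧ x0 ∉ s))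
        = (Finset.univ.erase x0).powersetCard d := by
      ext s
      simp only [Finset.mem_filter, Finset.mem_univ, true_and, Finset.mem_powersetCard,
        Finset.subset_erase, Finset.subset_univ]
      tauto
    rw [this, Finset.card_powersetCard, Finset.card_erase_of_mem (Finset.mem_univ x0),
      Finset.card_univ, Fintype.card_fin]
  calc (n - 1).choose d = ((Wj n d).submatrix fr fc).rank := by rw [hr, hcard]
    _ ≤ (Wj n d).rank := rank_submatrix_le' _ _ _

lemma key_sum {n d : ℕ} (γ : {s : Finset (Fin n) // s.card = d})
    (β : {s : Finset (Fin n) // s.card = d + 1 + 1}) (x y : Fin n) (hxy : x < y)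
    (hset : β.1 \ γ.1 = {x, y}) (hsub : γ.1 ⊆ β.1) :
    ∑ α : {s : Finset (Fin n) // s.card = d + 1}, Wj n d γ α * Wj n (d + 1) α β = 0 := by
  classical
  have hxβ : x ∈ β.1 ∧ x ∉ γ.1 := by
    have : x ∈ β.1 \ γ.1 := by rw [hset]; simp
    exact Finset.mem_sdiff.mp this
  have hyβ : y ∈ β.1 ∧ y ∉ γ.1 := by
    have : y ∈ β.1 \ γ.1 := by rw [hset]; simp
    exact Finset.mem_sdiff.mp this
  have hne : x ≠ y := hxy.ne
  have hβeq : β.1 = insert y (insert x γ.1) := by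
    ext z
    have h1 : z ∈ β.1 ↔ z ∈ γ.1 ∨ z ∈ β.1 \ γ.1 := by
      simp only [Finset.mem_sdiff]
      constructor
      · intro h; tauto
      · rintro (h | ⟨h, _⟩); exacts [hsub h, h]
    rw [h1, hset]
    simp only [Finset.mem_insert, Finset.mem_singleton]
    tauto
  set A₁ : {s : Finset (Fin n) // s.card = d + 1} :=
    ⟨insert x γ.1, by rw [Finset.card_insert_of_notMem hxβ.2, γ.2]⟩ with hA₁
  set A₂ : {s : Finset (Fin n) // s.card = d + 1} :=
    ⟨insert y γ.1, by rw [Finset.card_insert_of_notMem hyβ.2, γ.2]⟩ with hA₂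
  have hA12 : A₁ ≠ A₂ := by
    intro h
    have hx' : x ∈ insert y γ.1 := by
      have := Subtype.ext_iff.mp h
      simp only [hA₁, hA₂] at this
      rw [← this]; simp
    rcases Finset.mem_insert.mp hx' with h' | h'
    · exact hne h'
    · exact hxβ.2 h'
  have hzero : ∀ α ∈ (Finset.univ : Finset {s : Finset (Fin n) // s.card = d + 1}),
      α ∉ ({A₁, A₂} : Finset _) → Wj n d γ α * Wj n (d + 1) α β = 0 := by
    intro α _ hα
    by_cases h1 : γ.1 ⊆ α.1
    · by_cases h2 : α.1 ⊆ β.1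
      · exfalso
        have hc : (α.1 \ γ.1).card = 1 := by
          rw [Finset.card_sdiff_of_subset h1, α.2, γ.2]; omega
        obtain ⟨z, hz⟩ := Finset.card_eq_one.mp hc
        have hzmem : z ∈ α.1 \ γ.1 := by rw [hz]; simp
        have hzxy : z ∈ β.1 \ γ.1 := by
          rw [Finset.mem_sdiff] at hzmem ⊢
          exact ⟨h2 hzmem.1, hzmem.2⟩
        have hαeq : α.1 = insert z γ.1 := by
          rw [← Finset.sdiff_union_of_subset h1, hz]
          ext w; simp [Finset.mem_insert, or_comm]
        rw [hset] at hzxy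
        rcases Finset.mem_insert.mp hzxy with h' | h'
        · exact hα (by simp [Finset.mem_insert]; left; exact Subtype.ext (by rw [hαeq, h']))
        · rw [Finset.mem_singleton] at h'
          exact hα (by simp [Finset.mem_insert]; right; exact Subtype.ext (by rw [hαeq, h']))
      · rw [Wj_apply_zero α β h2, mul_zero]
    · rw [Wj_apply_zero γ α h1, zero_mul]
  rw [← Finset.sum_subset (Finset.subset_univ {A₁, A₂}) hzero, Finset.sum_pair hA12]
  -- now compute the two terms
  have hyA₁ : y ∉ A₁.1 := by
    simp only [hA₁, Finset.mem_insert]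
    rintro (h | h); exacts [hne h.symm, hyβ.2 h]
  have hxA₂ : x ∉ A₂.1 := by
    simp only [hA₂, Finset.mem_insert]
    rintro (h | h); exacts [hne h, hxβ.2 h]
  have t1a : Wj n d γ A₁ = (-1 : ℝ) ^ ((γ.1.filter (· < x)).card) :=
    Wj_apply γ A₁ x hxβ.2 rfl
  have t2a : Wj n d γ A₂ = (-1 : ℝ) ^ ((γ.1.filter (· < y)).card) :=
    Wj_apply γ A₂ y hyβ.2 rfl
  have t1b : Wj n (d + 1) A₁ β = (-1 : ℝ) ^ ((γ.1.filter (· < y)).card + 1) := by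
    rw [Wj_apply A₁ β y hyA₁ hβeq]
    congr 1
    have : A₁.1.filter (· < y) = insert x (γ.1.filter (· < y)) := by
      rw [hA₁]
      simp only [Finset.filter_insert, if_pos hxy]
    rw [this, Finset.card_insert_of_notMem (fun h => hxβ.2 (Finset.mem_filter.mp h).1)]
  have t2b : Wj n (d + 1) A₂ β = (-1 : ℝ) ^ ((γ.1.filter (· < x)).card) := by
    rw [Wj_apply A₂ β x hxA₂ (by rw [hβeq, Finset.insert_comm])]
    congr 1
    rw [hA₂]
    simp only [Finset.filter_insert, if_neg (not_lt.mpr hxy.le)]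
  rw [t1a, t2a, t1b, t2b, pow_succ]
  ring

lemma boundary (n d : ℕ) : Wj n d * Wj n (d + 1) = 0 := by
  classical
  ext γ β
  rw [Matrix.mul_apply, Matrix.zero_apply]
  by_cases hsub : γ.1 ⊆ β.1
  · have hcard : (β.1 \ γ.1).card = 2 := by
      rw [Finset.card_sdiff_of_subset hsub, β.2, γ.2]; omega
    obtain ⟨x, y, hxy, hset⟩ := Finset.card_eq_two.mp hcard
    rcases hxy.lt_or_gt with h | h
    · exact key_sum γ β x y h hset hsub
    · exact key_sum γ β y x h (by rw [hset, Finset.pair_comm]) hsub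
  · apply Finset.sum_eq_zero
    intro α _
    by_cases h1 : γ.1 ⊆ α.1
    · by_cases h2 : α.1 ⊆ β.1
      · exact absurd (h1.trans h2) hsub
      · rw [Wj_apply_zero α β h2, mul_zero]
    · rw [Wj_apply_zero γ α h1, zero_mul]

end Stmt7

/-- For all integers `d ≥ 0` and `n ≥ d + 1`, the rank over `ℝ` of
`W_{n,d}` equals `C(n−1, d)`. -/
theorem stmt_7 (n d : ℕ) (hn : d + 1 ≤ n) :
    (Wj n d).rank = (n - 1).choose d := by
  classical
  refine le_antisymm ?_ (Stmt7.lower n d hn)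
  obtain ⟨m, rfl⟩ : ∃ m, n = m + 1 := ⟨n - 1, by omega⟩
  cases d with
  | zero =>
    calc (Wj (m + 1) 0).rank ≤ Fintype.card {s : Finset (Fin (m + 1)) // s.card = 0} :=
          Matrix.rank_le_card_height _
      _ = (m + 1).choose 0 := by rw [Fintype.card_finset_len, Fintype.card_fin]
      _ = (m + 1 - 1).choose 0 := by simp
  | succ e =>
    have h0 := Matrix.rank_add_rank_le_card_of_mul_eq_zero (Stmt7.boundary (m + 1) e)
    have h1 : Fintype.card {s : Finset (Fin (m + 1)) // s.card = e + 1} = (m + 1).choose (e + 1) := by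
      rw [Fintype.card_finset_len, Fintype.card_fin]
    have h2 : (m + 1 - 1).choose e ≤ (Wj (m + 1) e).rank := Stmt7.lower (m + 1) e (by omega)
    have h3 : (m + 1).choose (e + 1) = m.choose e + m.choose (e + 1) := Nat.choose_succ_succ m e
    simp only [Nat.add_sub_cancel] at h2 ⊢
    omega
end

section
/- Let d ≥ 2 and n ≥ d + 1 be integers. Let M_{n,d} := [P_{n−1,d−1} | W_{n−1,d−1}] be the block matrix whose rows are indexed by the (d−1)-element subsets of {1,…,n−1} and whose columns are indexed by the disjoint union of the (d−1)-element subsets and the d-element subsets of {1,…,n−1}, and set R_{n,d} := M_{n,d}ᵀ · M_{n,d}. Then M_{n,d} · M_{n,d}ᵀ = n · P_{n−1,d−1}, R_{n,d} is positive semidefinite, R_{n,d}² = n(n−1) · R_{n,d}, and rank(R_{n,d}) = C(n−2, d−1); equivalently, the eigenvalues of R_{n,d} are n(n−1) with multiplicity C(n−2, d−1) and 0 with multiplicity C(n,d) − C(n−2, d−1). -/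
open Matrix Polynomial

/-- `M_{n,d} := [P_{n−1,d−1} | W_{n−1,d−1}]`, a block matrix with rows indexed by the
`(d−1)`-subsets of an `(n−1)`-set and columns by the disjoint union of the `(d−1)`-subsets
and the `d`-subsets.  Here `Mj m e = [P_{m,e} | W_{m,e}]`. -/
noncomputable def Mj (m e : ℕ) := Matrix.fromCols (Pj m e) (Wj m e)

/-- `R_{n,d} := M_{n,d}ᵀ · M_{n,d}`.  Here `Rj m e = (Mj m e)ᵀ * Mj m e`. -/
noncomputable def Rj (m e : ℕ) := (Mj m e)ᵀ * Mj m e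


namespace StmtAux
variable {m : ℕ}

variable {m : ℕ}

/-- sign of inserting `x` into `α`. -/
def sg (α : Finset (Fin m)) (x : Fin m) : ℝ := (-1) ^ ((α.filter (fun y => y < x)).card)

lemma sg_sq (α : Finset (Fin m)) (x : Fin m) : sg α x * sg α x = 1 := by
  rw [sg, ← pow_add]
  exact Even.neg_one_pow ⟨_, rfl⟩

lemma sg_insert_lt {α : Finset (Fin m)} {x y : Fin m} (hxy : x < y) (hx : x ∉ α) :
    sg (insert x α) y = - sg α y := by
  rw [sg, sg, Finset.filter_insert, if_pos hxy,
    Finset.card_insert_of_notMem (fun h => hx (Finset.mem_of_mem_filter _ h)), pow_succ]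
  ring

lemma sg_insert_gt {α : Finset (Fin m)} {x y : Fin m} (hxy : x < y) :
    sg (insert y α) x = sg α x := by
  rw [sg, sg, Finset.filter_insert, if_neg (by exact fun h => absurd (h.trans hxy) (lt_irrefl _))]

lemma exists_insert_of_card {α β : Finset (Fin m)} (h : α ⊆ β) (hc : β.card = α.card + 1) :
    ∃ x, x ∉ α ∧ β = insert x α := by
  have h1 : (β \ α).card = 1 := by
    rw [Finset.card_sdiff_of_subset h, hc]; omega
  obtain ⟨x, hx⟩ := Finset.card_eq_one.mp h1
  refine ⟨x, ?_, ?_⟩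
  · have : x ∈ β \ α := hx ▸ Finset.mem_singleton_self x
    exact (Finset.mem_sdiff.mp this).2
  · apply Finset.Subset.antisymm
    · intro y hy
      by_cases hyα : y ∈ α
      · exact Finset.mem_insert_of_mem hyα
      · have : y ∈ β \ α := Finset.mem_sdiff.mpr ⟨hy, hyα⟩
        rw [hx] at this
        exact Finset.mem_insert.mpr (Or.inl (Finset.mem_singleton.mp this))
    · intro y hy
      rcases Finset.mem_insert.mp hy with h1 | h2
      · have : x ∈ β \ α := hx ▸ Finset.mem_singleton_self x
        exact h1 ▸ (Finset.mem_sdiff.mp this).1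
      · exact h h2

lemma Wj_apply_insert {e : ℕ} (α : {s : Finset (Fin m) // s.card = e})
    (β : {s : Finset (Fin m) // s.card = e + 1}) {x : Fin m}
    (hx : x ∉ α.1) (hβ : β.1 = insert x α.1) : Wj m e α β = sg α.1 x := by
  have hsub : α.1 ⊆ β.1 := hβ ▸ Finset.subset_insert _ _
  have hsd : β.1 \ α.1 = {x} := by
    rw [hβ, Finset.insert_sdiff_of_notMem _ hx, Finset.sdiff_self]
    rfl
  rw [Wj, if_pos hsub]
  congr 1
  have : β.1.filter (fun y => ∃ z ∈ β.1 \ α.1, y < z) = α.1.filter (fun y => y < x) := by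
    rw [hsd, hβ]
    ext y
    simp only [Finset.mem_filter, Finset.mem_insert, Finset.mem_singleton]
    constructor
    · rintro ⟨hy | hy, z, rfl, hz⟩
      · exact absurd hz (by simp [hy])
      · exact ⟨hy, hz⟩
    · rintro ⟨hy, hz⟩
      exact ⟨Or.inr hy, x, rfl, hz⟩
  rw [this]

lemma Wj_eq_zero {e : ℕ} {α : {s : Finset (Fin m) // s.card = e}}
    {β : {s : Finset (Fin m) // s.card = e + 1}} (h : ¬ α.1 ⊆ β.1) : Wj m e α β = 0 :=
  if_neg h

lemma Wj_ne_zero_subset {e : ℕ} {α : {s : Finset (Fin m) // s.card = e}}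
    {β : {s : Finset (Fin m) // s.card = e + 1}} (h : Wj m e α β ≠ 0) : α.1 ⊆ β.1 := by
  by_contra hc; exact h (Wj_eq_zero hc)

lemma Wj_sq {e : ℕ} (α : {s : Finset (Fin m) // s.card = e})
    (β : {s : Finset (Fin m) // s.card = e + 1}) (h : α.1 ⊆ β.1) :
    Wj m e α β * Wj m e α β = 1 := by
  obtain ⟨x, hx, hβ⟩ := exists_insert_of_card h (by rw [β.2, α.2])
  rw [Wj_apply_insert α β hx hβ]; exact sg_sq _ _


variable {m : ℕ}

lemma card_subsets (A : Finset (Fin m)) (e : ℕ) :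
    ((Finset.univ : Finset {s : Finset (Fin m) // s.card = e}).filter
      (fun γ => γ.1 ⊆ A)).card = A.card.choose e := by
  rw [← Finset.card_powersetCard e A]
  symm
  apply Finset.card_bij (fun t ht => (⟨t, (Finset.mem_powersetCard.mp ht).2⟩ :
      {s : Finset (Fin m) // s.card = e}))
  · intro t ht
    exact Finset.mem_filter.mpr ⟨Finset.mem_univ _, (Finset.mem_powersetCard.mp ht).1⟩
  · intro a ha b hb hab
    exact congrArg Subtype.val hab
  · intro b hb
    exact ⟨b.1, Finset.mem_powersetCard.mpr ⟨(Finset.mem_filter.mp hb).2, b.2⟩, rfl⟩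

lemma card_supersets (A : Finset (Fin m)) (k : ℕ) (hA : A.card = k) :
    ((Finset.univ : Finset {s : Finset (Fin m) // s.card = k + 1}).filter
      (fun δ => A ⊆ δ.1)).card = m - k := by
  have hcompl : (Aᶜ : Finset (Fin m)).card = m - k := by
    rw [Finset.card_compl, hA, Fintype.card_fin]
  rw [← hcompl]
  symm
  apply Finset.card_bij (fun x hx => (⟨insert x A, by
    rw [Finset.card_insert_of_notMem (Finset.mem_compl.mp hx), hA]⟩ :
      {s : Finset (Fin m) // s.card = k + 1}))
  · intro x hx
    exact Finset.mem_filter.mpr ⟨Finset.mem_univ _, Finset.subset_insert _ _⟩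
  · intro x hx y hy hxy
    have := congrArg Subtype.val hxy
    simp only at this
    have hx' := Finset.mem_compl.mp hx
    have : x ∈ insert y A := this ▸ Finset.mem_insert_self x A
    rcases Finset.mem_insert.mp this with h | h
    · exact h
    · exact absurd h hx'
  · intro δ hδ
    obtain ⟨x, hx, hδx⟩ := exists_insert_of_card (Finset.mem_filter.mp hδ).2
      (by rw [δ.2, hA])
    exact ⟨x, Finset.mem_compl.mpr hx, Subtype.ext hδx.symm⟩


lemma Wj_comp (e : ℕ) : Wj m e * Wj m (e + 1) = 0 := by
  ext α γ
  rw [Matrix.mul_apply, Matrix.zero_apply]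
  by_cases hsub : α.1 ⊆ γ.1
  · have hcard : (γ.1 \ α.1).card = 2 := by
      rw [Finset.card_sdiff_of_subset hsub, γ.2, α.2]; omega
    obtain ⟨x, y, hxy, hset⟩ := Finset.card_eq_two.mp hcard
    wlog hlt : x < y generalizing x y
    · exact this y x hxy.symm (by rw [hset]; exact Finset.pair_comm x y)
        (hxy.lt_or_gt.resolve_left hlt)
    have hxmem : x ∈ γ.1 \ α.1 := by rw [hset]; simp
    have hymem : y ∈ γ.1 \ α.1 := by rw [hset]; simp
    have hxα : x ∉ α.1 := (Finset.mem_sdiff.mp hxmem).2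
    have hyα : y ∉ α.1 := (Finset.mem_sdiff.mp hymem).2
    have hγ : γ.1 = insert y (insert x α.1) := by
      rw [← Finset.union_sdiff_of_subset hsub, hset]
      ext z; simp [or_comm, or_assoc, or_left_comm]
    have hb1 : (insert x α.1).card = e + 1 := by
      rw [Finset.card_insert_of_notMem hxα, α.2]
    have hb2 : (insert y α.1).card = e + 1 := by
      rw [Finset.card_insert_of_notMem hyα, α.2]
    set β₁ : {s : Finset (Fin m) // s.card = e + 1} := ⟨insert x α.1, hb1⟩
    set β₂ : {s : Finset (Fin m) // s.card = e + 1} := ⟨insert y α.1, hb2⟩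
    have hne : β₁ ≠ β₂ := by
      intro h
      have := congrArg Subtype.val h
      simp only [β₁, β₂] at this
      have : x ∈ insert y α.1 := this ▸ Finset.mem_insert_self x α.1
      rcases Finset.mem_insert.mp this with h' | h'
      · exact hxy h'
      · exact hxα h'
    rw [← Finset.sum_subset (Finset.subset_univ {β₁, β₂}) ?_]
    · rw [Finset.sum_pair hne]
      have e1 : Wj m e α β₁ = sg α.1 x := Wj_apply_insert α β₁ hxα rfl
      have e2 : Wj m e α β₂ = sg α.1 y := Wj_apply_insert α β₂ hyα rfl
      have e3 : Wj m (e + 1) β₁ γ = sg β₁.1 y := by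
        apply Wj_apply_insert β₁ γ (by simp [β₁, hyα, hxy.symm]) hγ
      have e4 : Wj m (e + 1) β₂ γ = sg β₂.1 x := by
        apply Wj_apply_insert β₂ γ (by simp [β₂, hxα, hxy])
        rw [hγ, Finset.insert_comm]
      rw [e1, e2, e3, e4]
      have s3 : sg β₁.1 y = - sg α.1 y := sg_insert_lt hlt hxα
      have s4 : sg β₂.1 x = sg α.1 x := sg_insert_gt hlt
      rw [s3, s4]; ring
    · intro β _ hβ
      by_cases h1 : α.1 ⊆ β.1
      · by_cases h2 : β.1 ⊆ γ.1
        · exfalso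
          have hβd : (β.1 \ α.1).card = 1 := by
            rw [Finset.card_sdiff_of_subset h1, β.2, α.2]; omega
          obtain ⟨z, hz⟩ := Finset.card_eq_one.mp hβd
          have hzmem : z ∈ γ.1 \ α.1 := by
            have : z ∈ β.1 \ α.1 := hz ▸ Finset.mem_singleton_self z
            exact Finset.mem_sdiff.mpr ⟨h2 (Finset.mem_sdiff.mp this).1,
              (Finset.mem_sdiff.mp this).2⟩
          have hβeq : β.1 = insert z α.1 := by
            obtain ⟨w, hw, hweq⟩ := exists_insert_of_card h1 (by rw [β.2, α.2])
            have : w ∈ β.1 \ α.1 := Finset.mem_sdiff.mpr ⟨hweq ▸ Finset.mem_insert_self w _, hw⟩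
            rw [hz, Finset.mem_singleton] at this
            rw [hweq, this]
          rw [hset, Finset.mem_insert, Finset.mem_singleton] at hzmem
          apply hβ
          simp only [Finset.mem_insert, Finset.mem_singleton]
          rcases hzmem with rfl | rfl
          · exact Or.inl (Subtype.ext hβeq)
          · exact Or.inr (Subtype.ext hβeq)
        · rw [Wj_eq_zero h2, mul_zero]
      · rw [Wj_eq_zero h1, zero_mul]
  · apply Finset.sum_eq_zero
    intro β _
    by_cases h1 : α.1 ⊆ β.1
    · by_cases h2 : β.1 ⊆ γ.1
      · exact absurd (h1.trans h2) hsub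
      · rw [Wj_eq_zero h2, mul_zero]
    · rw [Wj_eq_zero h1, zero_mul]

lemma laplacian (e : ℕ) :
    (Wj m e)ᵀ * Wj m e + Wj m (e + 1) * (Wj m (e + 1))ᵀ
      = (m : ℝ) • (1 : Matrix {s : Finset (Fin m) // s.card = e + 1}
          {s : Finset (Fin m) // s.card = e + 1} ℝ) := by
  ext α β
  rw [Matrix.add_apply, Matrix.mul_apply, Matrix.mul_apply, Matrix.smul_apply]
  simp only [Matrix.transpose_apply]
  by_cases hab : α = β
  · subst hab
    rw [Matrix.one_apply_eq, smul_eq_mul, mul_one]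
    have hle : e + 1 ≤ m := by
      have := Finset.card_le_univ α.1
      rw [α.2] at this
      simpa using this
    have h1 : ∀ γ : {s : Finset (Fin m) // s.card = e},
        Wj m e γ α * Wj m e γ α = if γ.1 ⊆ α.1 then (1 : ℝ) else 0 := by
      intro γ
      by_cases h : γ.1 ⊆ α.1
      · rw [if_pos h]; exact Wj_sq γ α h
      · rw [if_neg h, Wj_eq_zero h, mul_zero]
    have h2 : ∀ δ : {s : Finset (Fin m) // s.card = e + 1 + 1},
        Wj m (e + 1) α δ * Wj m (e + 1) α δ = if α.1 ⊆ δ.1 then (1 : ℝ) else 0 := by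
      intro δ
      by_cases h : α.1 ⊆ δ.1
      · rw [if_pos h]; exact Wj_sq α δ h
      · rw [if_neg h, Wj_eq_zero h, mul_zero]
    calc (∑ γ : {s : Finset (Fin m) // s.card = e}, Wj m e γ α * Wj m e γ α)
          + ∑ δ : {s : Finset (Fin m) // s.card = e + 1 + 1},
              Wj m (e + 1) α δ * Wj m (e + 1) α δ
        = (((Finset.univ : Finset {s : Finset (Fin m) // s.card = e}).filter
              (fun γ => γ.1 ⊆ α.1)).card : ℝ)
          + (((Finset.univ : Finset {s : Finset (Fin m) // s.card = e + 1 + 1}).filter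
              (fun δ => α.1 ⊆ δ.1)).card : ℝ) := by
          rw [Finset.sum_congr rfl (fun γ _ => h1 γ), Finset.sum_congr rfl (fun δ _ => h2 δ),
            Finset.sum_boole, Finset.sum_boole]
      _ = ((e + 1 : ℕ) : ℝ) + ((m - (e + 1) : ℕ) : ℝ) := by
          rw [card_subsets α.1 e, α.2, Nat.choose_succ_self_right,
            card_supersets α.1 (e + 1) α.2]
      _ = (m : ℝ) := by
          rw [← Nat.cast_add, Nat.add_sub_cancel' hle]
  · rw [Matrix.one_apply_ne hab, smul_zero]
    have hine : (α.1 ∩ β.1).card < e + 1 := by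
      refine lt_of_le_of_ne (le_trans (Finset.card_le_card Finset.inter_subset_left) (le_of_eq α.2)) ?_
      intro h
      apply hab
      have h1 : α.1 ∩ β.1 = α.1 := Finset.eq_of_subset_of_card_le Finset.inter_subset_left
        (by rw [α.2, h])
      exact Subtype.ext (Finset.eq_of_subset_of_card_le (h1 ▸ Finset.inter_subset_right)
        (by rw [α.2, β.2]))
    rcases lt_or_eq_of_le (Nat.lt_succ_iff.mp hine) with hlt | heq
    · -- intersection small: all terms vanish
      have z1 : (∑ γ : {s : Finset (Fin m) // s.card = e}, Wj m e γ α * Wj m e γ β) = 0 := by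
        apply Finset.sum_eq_zero
        intro γ _
        by_cases hga : γ.1 ⊆ α.1
        · by_cases hgb : γ.1 ⊆ β.1
          · exfalso
            have : γ.1 ⊆ α.1 ∩ β.1 := Finset.subset_inter hga hgb
            have := Finset.card_le_card this
            rw [γ.2] at this
            omega
          · rw [Wj_eq_zero hgb, mul_zero]
        · rw [Wj_eq_zero hga, zero_mul]
      have z2 : (∑ δ : {s : Finset (Fin m) // s.card = e + 1 + 1},
          Wj m (e + 1) α δ * Wj m (e + 1) β δ) = 0 := by
        apply Finset.sum_eq_zero
        intro δ _
        by_cases hda : α.1 ⊆ δ.1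
        · by_cases hdb : β.1 ⊆ δ.1
          · exfalso
            have hsub : α.1 ∪ β.1 ⊆ δ.1 := Finset.union_subset hda hdb
            have hc := Finset.card_le_card hsub
            have := Finset.card_union_add_card_inter α.1 β.1
            rw [α.2, β.2, δ.2] at *
            omega
          · rw [Wj_eq_zero hdb, mul_zero]
        · rw [Wj_eq_zero hda, zero_mul]
      rw [z1, z2, add_zero]
    · -- intersection has size e
      set σ : Finset (Fin m) := α.1 ∩ β.1 with hσ
      have hσcard : σ.card = e := heq
      have hsa : (α.1 \ β.1).card = 1 := by
        have := Finset.card_inter_add_card_sdiff α.1 β.1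
        rw [α.2, ← hσ, hσcard] at this; omega
      have hsb : (β.1 \ α.1).card = 1 := by
        have := Finset.card_inter_add_card_sdiff β.1 α.1
        rw [β.2, Finset.inter_comm, ← hσ, hσcard] at this; omega
      obtain ⟨a, ha⟩ := Finset.card_eq_one.mp hsa
      obtain ⟨b, hb⟩ := Finset.card_eq_one.mp hsb
      have hamem : a ∈ α.1 \ β.1 := ha ▸ Finset.mem_singleton_self a
      have hbmem : b ∈ β.1 \ α.1 := hb ▸ Finset.mem_singleton_self b
      have haα : a ∈ α.1 := (Finset.mem_sdiff.mp hamem).1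
      have haβ : a ∉ β.1 := (Finset.mem_sdiff.mp hamem).2
      have hbβ : b ∈ β.1 := (Finset.mem_sdiff.mp hbmem).1
      have hbα : b ∉ α.1 := (Finset.mem_sdiff.mp hbmem).2
      have hneab : a ≠ b := fun h => haβ (h ▸ hbβ)
      have haσ : a ∉ σ := fun h => haβ (Finset.mem_of_mem_inter_right h)
      have hbσ : b ∉ σ := fun h => hbα (Finset.mem_of_mem_inter_left h)
      have hαeq : α.1 = insert a σ := by
        rw [Finset.insert_eq, ← ha, hσ, Finset.sdiff_union_inter]
      have hβeq : β.1 = insert b σ := by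
        rw [Finset.insert_eq, ← hb, hσ, Finset.inter_comm, Finset.sdiff_union_inter]
      have hσ' : σ.card = e := hσcard
      set σ' : {s : Finset (Fin m) // s.card = e} := ⟨σ, hσcard⟩
      have hτcard : (insert b α.1).card = e + 1 + 1 := by
        rw [Finset.card_insert_of_notMem hbα, α.2]
      set δ' : {s : Finset (Fin m) // s.card = e + 1 + 1} := ⟨insert b α.1, hτcard⟩
      have hτeq : insert b α.1 = insert a β.1 := by
        rw [hαeq, hβeq]; ext z; simp; tauto
      -- first sum
      have s1 : (∑ γ : {s : Finset (Fin m) // s.card = e}, Wj m e γ α * Wj m e γ β)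
          = sg σ a * sg σ b := by
        rw [Finset.sum_eq_single σ']
        · rw [Wj_apply_insert σ' α haσ hαeq, Wj_apply_insert σ' β hbσ hβeq]
        · intro γ _ hγ
          by_cases hga : γ.1 ⊆ α.1
          · by_cases hgb : γ.1 ⊆ β.1
            · exfalso
              apply hγ
              apply Subtype.ext
              exact Finset.eq_of_subset_of_card_le (Finset.subset_inter hga hgb)
                (by rw [γ.2, hσcard])
            · rw [Wj_eq_zero hgb, mul_zero]
          · rw [Wj_eq_zero hga, zero_mul]
        · intro h; exact absurd (Finset.mem_univ σ') h
      -- second sum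
      have s2 : (∑ δ : {s : Finset (Fin m) // s.card = e + 1 + 1},
          Wj m (e + 1) α δ * Wj m (e + 1) β δ) = sg α.1 b * sg β.1 a := by
        rw [Finset.sum_eq_single δ']
        · rw [Wj_apply_insert α δ' hbα rfl, Wj_apply_insert β δ' haβ hτeq]
        · intro δ _ hδ
          by_cases hda : α.1 ⊆ δ.1
          · by_cases hdb : β.1 ⊆ δ.1
            · exfalso
              apply hδ
              apply Subtype.ext
              have hsub : insert b α.1 ⊆ δ.1 := by
                rw [Finset.insert_subset_iff]; exact ⟨hdb hbβ, hda⟩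
              exact (Finset.eq_of_subset_of_card_le hsub (by rw [δ.2, hτcard])).symm
            · rw [Wj_eq_zero hdb, mul_zero]
          · rw [Wj_eq_zero hda, zero_mul]
        · intro h; exact absurd (Finset.mem_univ δ') h
      rw [s1, s2]
      rcases hneab.lt_or_gt with hlt | hlt
      · rw [hαeq, hβeq, sg_insert_lt hlt haσ, sg_insert_gt hlt]; ring
      · rw [hαeq, hβeq, sg_insert_gt hlt, sg_insert_lt hlt hbσ]; ring

lemma Pj_symm (e : ℕ) : (Pj m e)ᵀ = Pj m e := by
  rw [Pj, Matrix.transpose_mul, Matrix.transpose_transpose]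

lemma WtW (e : ℕ) : (Wj m e)ᵀ * Wj m e
    = (m : ℝ) • (1 : Matrix {s : Finset (Fin m) // s.card = e + 1}
        {s : Finset (Fin m) // s.card = e + 1} ℝ) - Wj m (e + 1) * (Wj m (e + 1))ᵀ :=
  eq_sub_of_add_eq (laplacian e)

lemma Pj_mul_Wj (e : ℕ) : Pj m e * Wj m e = (m : ℝ) • Wj m e := by
  rw [Pj, Matrix.mul_assoc, WtW, Matrix.mul_sub, Matrix.mul_smul, Matrix.mul_one, ← Matrix.mul_assoc, Wj_comp,
    Matrix.zero_mul, sub_zero]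

lemma Pj_sq (e : ℕ) : Pj m e * Pj m e = (m : ℝ) • Pj m e := by
  nth_rewrite 2 [Pj]
  rw [← Matrix.mul_assoc, Pj_mul_Wj, Matrix.smul_mul, Pj]

lemma Mj_mul_transpose (e : ℕ) : Mj m e * (Mj m e)ᵀ = ((m : ℝ) + 1) • Pj m e := by
  rw [Mj, Matrix.transpose_fromCols, Matrix.fromCols_mul_fromRows, Pj_symm, Pj_sq]
  rw [add_smul, one_smul, Pj]

lemma Pj_mul_Mj (e : ℕ) : Pj m e * Mj m e = (m : ℝ) • Mj m e := by
  rw [Mj, Matrix.mul_fromCols, Pj_sq, Pj_mul_Wj]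
  ext i (j | j) <;> simp [Matrix.fromCols]

lemma Rj_sq (e : ℕ) : Rj m e * Rj m e = (((m : ℝ) + 1) * m) • Rj m e := by
  calc Rj m e * Rj m e = (Mj m e)ᵀ * (Mj m e * (Mj m e)ᵀ * Mj m e) := by
        simp only [Rj, Matrix.mul_assoc]
    _ = (Mj m e)ᵀ * (((m : ℝ) + 1) • (Pj m e * Mj m e)) := by
        rw [Mj_mul_transpose, Matrix.smul_mul]
    _ = (((m : ℝ) + 1) * m) • Rj m e := by
        rw [Pj_mul_Mj, smul_smul, Matrix.mul_smul, Rj]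

lemma Pj_diag (e : ℕ) (α : {s : Finset (Fin m) // s.card = e}) :
    Pj m e α α = ((m - e : ℕ) : ℝ) := by
  rw [Pj, Matrix.mul_apply]
  simp only [Matrix.transpose_apply]
  have h1 : ∀ δ : {s : Finset (Fin m) // s.card = e + 1},
      Wj m e α δ * Wj m e α δ = if α.1 ⊆ δ.1 then (1 : ℝ) else 0 := by
    intro δ
    by_cases h : α.1 ⊆ δ.1
    · rw [if_pos h]; exact Wj_sq α δ h
    · rw [if_neg h, Wj_eq_zero h, mul_zero]
  rw [Finset.sum_congr rfl (fun δ _ => h1 δ), Finset.sum_boole, card_supersets α.1 e α.2]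

lemma trace_Pj (e : ℕ) : (Pj m e).trace = ((m - e : ℕ) : ℝ) * (Nat.choose m e : ℕ) := by
  rw [Matrix.trace]
  rw [Finset.sum_congr rfl (fun α _ => by rw [Matrix.diag_apply, Pj_diag e α])]
  rw [Finset.sum_const, Finset.card_univ, Fintype.card_finset_len, Fintype.card_fin,
    nsmul_eq_mul, mul_comm]

lemma trace_Rj (e : ℕ) :
    (Rj m e).trace = ((m : ℝ) + 1) * (((m - e : ℕ) : ℝ) * (Nat.choose m e : ℕ)) := by
  rw [Rj, Matrix.trace_mul_comm, Mj_mul_transpose, Matrix.trace_smul, trace_Pj, smul_eq_mul]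

lemma charpoly_diag {N : Type*} [Fintype N] [DecidableEq N] (v : N → ℝ) :
    (Matrix.diagonal v).charpoly = ∏ i, (X - C (v i)) := by
  rw [Matrix.charpoly]
  have h : (Matrix.diagonal v).charmatrix = Matrix.diagonal (fun i => (X : ℝ[X]) - C (v i)) := by
    ext i j
    by_cases h : i = j
    · subst h
      rw [Matrix.charmatrix_apply_eq, Matrix.diagonal_apply_eq, Matrix.diagonal_apply_eq]
    · rw [Matrix.charmatrix_apply_ne _ _ _ h, Matrix.diagonal_apply_ne _ h,
        Matrix.diagonal_apply_ne _ h, map_zero, neg_zero]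
  rw [h, Matrix.det_diagonal]

lemma charpoly_conj_inner {N : Type*} [Fintype N] [DecidableEq N] (P Q A : Matrix N N ℝ)
    (hPQ : P * Q = 1) : (P * A * Q).charpoly = A.charpoly := by
  classical
  set f : Matrix N N ℝ →+* Matrix N N ℝ[X] := (Polynomial.C : ℝ →+* ℝ[X]).mapMatrix with hf
  have hfmul : ∀ M M' : Matrix N N ℝ, f (M * M') = f M * f M' := fun M M' => map_mul f M M'
  have hone : f P * f Q = 1 := by rw [← hfmul, hPQ, _root_.map_one]
  have hcomm : Matrix.scalar N (X : ℝ[X]) * f P = f P * Matrix.scalar N (X : ℝ[X]) :=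
    (Matrix.scalar_commute (X : ℝ[X]) (fun r => Commute.all _ _) (f P)).eq
  have hchm : (P * A * Q).charmatrix = f P * A.charmatrix * f Q := by
    rw [Matrix.charmatrix, Matrix.charmatrix, Matrix.mul_sub, Matrix.sub_mul]
    congr 1
    · rw [← hcomm, Matrix.mul_assoc, ← hfmul, hPQ]
      have : f (1 : Matrix N N ℝ) = 1 := _root_.map_one f
      rw [this, Matrix.mul_one]
    · show (Polynomial.C : ℝ →+* ℝ[X]).mapMatrix (P * A * Q) = _
      rw [← hf, hfmul, hfmul]
  rw [Matrix.charpoly, hchm, Matrix.det_mul, Matrix.det_mul]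
  have hdet : (f P).det * (f Q).det = 1 := by
    rw [← Matrix.det_mul, hone, Matrix.det_one]
  calc (f P).det * A.charmatrix.det * (f Q).det
      = A.charmatrix.det * ((f P).det * (f Q).det) := by ring
    _ = A.charpoly := by rw [hdet, mul_one]; rfl

lemma charpoly_hermitian {N : Type*} [Fintype N] [DecidableEq N] {A : Matrix N N ℝ}
    (hA : A.IsHermitian) : A.charpoly = ∏ i, (X - C (hA.eigenvalues i)) := by
  have hU : ((Matrix.IsHermitian.eigenvectorUnitary hA : Matrix.unitaryGroup N ℝ) : Matrix N N ℝ)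
        * star ((Matrix.IsHermitian.eigenvectorUnitary hA : Matrix.unitaryGroup N ℝ) : Matrix N N ℝ)
      = 1 := Matrix.mem_unitaryGroup_iff.mp (Matrix.IsHermitian.eigenvectorUnitary hA).2
  conv_lhs => rw [hA.spectral_theorem, Unitary.conjStarAlgAut_apply]
  rw [charpoly_conj_inner _ _ _ hU]
  have : (RCLike.ofReal ∘ hA.eigenvalues : N → ℝ) = hA.eigenvalues := by
    ext i; simp
  rw [this, charpoly_diag]

lemma eigenvalues_quad {N : Type*} [Fintype N] [DecidableEq N] {A : Matrix N N ℝ}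
    (hA : A.IsHermitian) (c : ℝ) (hsq : A * A = c • A) (i : N) :
    hA.eigenvalues i = 0 ∨ hA.eigenvalues i = c := by
  have hv := hA.mulVec_eigenvectorBasis i
  have h2 : (A * A) *ᵥ ⇑(hA.eigenvectorBasis i)
      = (hA.eigenvalues i * hA.eigenvalues i) • ⇑(hA.eigenvectorBasis i) := by
    rw [← Matrix.mulVec_mulVec, hv, Matrix.mulVec_smul, hv, smul_smul]
  rw [hsq, Matrix.smul_mulVec, hv, smul_smul] at h2
  have hvne : ⇑(hA.eigenvectorBasis i) ≠ 0 := by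
    intro h
    exact hA.eigenvectorBasis.orthonormal.ne_zero i (by ext j; exact congrFun h j)
  have hkey : hA.eigenvalues i * hA.eigenvalues i - c * hA.eigenvalues i = 0 := by
    have hz : (hA.eigenvalues i * hA.eigenvalues i - c * hA.eigenvalues i)
        • ⇑(hA.eigenvectorBasis i) = 0 := by
      rw [sub_smul, h2, sub_self]
    rcases smul_eq_zero.mp hz with h | h
    · exact h
    · exact absurd h hvne
  have : hA.eigenvalues i * (hA.eigenvalues i - c) = 0 := by ring_nf; ring_nf at hkey; linarith
  rcases mul_eq_zero.mp this with h | h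
  · exact Or.inl h
  · exact Or.inr (by linarith [sub_eq_zero.mp h])

end StmtAux

set_option maxHeartbeats 2000000 in
/-- Let `d ≥ 2` and `n ≥ d + 1`.  With `M = M_{n,d} = Mj (n−1) (d−1)`
and `R = R_{n,d} = Rj (n−1) (d−1)`:  `M·Mᵀ = n·P_{n−1,d−1}`, `R` is positive semidefinite,
`R² = n(n−1)·R`, and `rank(R) = C(n−2, d−1)`; equivalently the eigenvalues of `R` are
`n(n−1)` with multiplicity `C(n−2,d−1)` and `0` with multiplicity `C(n,d) − C(n−2,d−1)`
(stated via the characteristic polynomial). -/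
theorem stmt_10 (n d : ℕ) (hd : 2 ≤ d) (hn : d + 1 ≤ n) :
    Mj (n - 1) (d - 1) * (Mj (n - 1) (d - 1))ᵀ = (n : ℝ) • Pj (n - 1) (d - 1) ∧
    (Rj (n - 1) (d - 1)).PosSemidef ∧
    Rj (n - 1) (d - 1) * Rj (n - 1) (d - 1) = ((n : ℝ) * ((n : ℝ) - 1)) • Rj (n - 1) (d - 1) ∧
    (Rj (n - 1) (d - 1)).rank = (n - 2).choose (d - 1) ∧
    (Rj (n - 1) (d - 1)).charpoly =
      (X - C ((n : ℝ) * ((n : ℝ) - 1))) ^ ((n - 2).choose (d - 1)) *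
        X ^ (n.choose d - (n - 2).choose (d - 1)) := by
  classical
  open StmtAux in
  set m := n - 1 with hm
  set e := d - 1 with he
  have hm1 : m + 1 = n := by omega
  have he1 : e + 1 = d := by omega
  have hcastm : ((m : ℝ) + 1) = (n : ℝ) := by
    rw [← hm1]; push_cast; ring
  have hcastm2 : (m : ℝ) = (n : ℝ) - 1 := by
    rw [← hm1]; push_cast; ring
  have hCT : (Mj m e)ᴴ = (Mj m e)ᵀ :=
    Matrix.conjTranspose_eq_transpose_of_trivial _
  have hpsd : (Rj m e).PosSemidef := by
    rw [Rj, ← hCT]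
    exact Matrix.posSemidef_conjTranspose_mul_self _
  have hherm : (Rj m e).IsHermitian := hpsd.isHermitian
  have part1 : Mj m e * (Mj m e)ᵀ = (n : ℝ) • Pj m e := by
    rw [Mj_mul_transpose, hcastm]
  have part3 : Rj m e * Rj m e = ((n : ℝ) * ((n : ℝ) - 1)) • Rj m e := by
    rw [Rj_sq, hcastm, hcastm2]
  set c : ℝ := (n : ℝ) * ((n : ℝ) - 1) with hc
  have heig : ∀ i, hherm.eigenvalues i = 0 ∨ hherm.eigenvalues i = c :=
    eigenvalues_quad hherm c part3
  set S := Finset.univ.filter (fun i => hherm.eigenvalues i ≠ 0) with hS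
  have hrank : (Rj m e).rank = S.card := by
    rw [hherm.rank_eq_card_non_zero_eigs, Fintype.card_subtype]
  -- trace computations
  have hU' : star ((Matrix.IsHermitian.eigenvectorUnitary hherm :
          Matrix.unitaryGroup ({s : Finset (Fin m) // s.card = e} ⊕
            {s : Finset (Fin m) // s.card = e + 1}) ℝ) :
        Matrix ({s : Finset (Fin m) // s.card = e} ⊕ {s : Finset (Fin m) // s.card = e + 1})
          ({s : Finset (Fin m) // s.card = e} ⊕ {s : Finset (Fin m) // s.card = e + 1}) ℝ)
      * ((Matrix.IsHermitian.eigenvectorUnitary hherm :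
          Matrix.unitaryGroup ({s : Finset (Fin m) // s.card = e} ⊕
            {s : Finset (Fin m) // s.card = e + 1}) ℝ) :
        Matrix ({s : Finset (Fin m) // s.card = e} ⊕ {s : Finset (Fin m) // s.card = e + 1})
          ({s : Finset (Fin m) // s.card = e} ⊕ {s : Finset (Fin m) // s.card = e + 1}) ℝ) = 1 :=
    Matrix.mem_unitaryGroup_iff'.mp (Matrix.IsHermitian.eigenvectorUnitary hherm).2
  have htr1 : (Rj m e).trace = ∑ i, hherm.eigenvalues i := by
    conv_lhs => rw [hherm.spectral_theorem, Unitary.conjStarAlgAut_apply]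
    rw [Matrix.trace_mul_cycle, hU', Matrix.one_mul, Matrix.trace_diagonal]
    simp
  have htr2 : ∑ i, hherm.eigenvalues i = (S.card : ℝ) * c := by
    rw [← Finset.sum_filter_ne_zero Finset.univ, ← hS,
      Finset.sum_congr rfl (fun i hi => ?_), Finset.sum_const, nsmul_eq_mul]
    rcases heig i with h | h
    · exact absurd h (Finset.mem_filter.mp hi).2
    · exact h
  have htr3 := trace_Rj (m := m) e
  have hkey : n * (n - 1) * S.card = n * ((n - d) * (n - 1).choose (d - 1)) := by
    have hr : (S.card : ℝ) * c = ((m : ℝ) + 1) * (((m - e : ℕ) : ℝ) * (Nat.choose m e : ℕ)) := by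
      rw [← htr2, ← htr1, htr3]
    have hme : (m - e : ℕ) = n - d := by omega
    have hch : Nat.choose m e = (n - 1).choose (d - 1) := rfl
    rw [hcastm, hc, hme, hch] at hr
    have hcast : ((n * (n - 1) * S.card : ℕ) : ℝ) = ((n * ((n - d) * (n - 1).choose (d - 1)) : ℕ) : ℝ) := by
      push_cast [Nat.cast_sub (show 1 ≤ n by omega), Nat.cast_sub (show d ≤ n by omega)] at hr ⊢
      linear_combination hr
    exact_mod_cast hcast
  have hchooseid : (n - 1) * (n - 2).choose (d - 1) = (n - d) * (n - 1).choose (d - 1) := by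
    have h0 := Nat.choose_mul_succ_eq (n - 2) (d - 1)
    have h2 : n - 2 + 1 = n - 1 := by omega
    have h3 : n - 1 - (d - 1) = n - d := by omega
    rw [h2, h3] at h0
    rw [mul_comm ((n : ℕ) - 1) _, h0, mul_comm]
  have hScard : S.card = (n - 2).choose (d - 1) := by
    have hn0 : 0 < n * (n - 1) := by
      have h3 : 3 ≤ n := by omega
      exact Nat.mul_pos (by omega) (by omega)
    apply Nat.eq_of_mul_eq_mul_left hn0
    calc n * (n - 1) * S.card = n * ((n - d) * (n - 1).choose (d - 1)) := hkey
      _ = n * ((n - 1) * (n - 2).choose (d - 1)) := by rw [← hchooseid]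
      _ = n * (n - 1) * ((n - 2).choose (d - 1)) := by ring
  have hNcard : Fintype.card ({s : Finset (Fin m) // s.card = e} ⊕
      {s : Finset (Fin m) // s.card = e + 1}) = n.choose d := by
    rw [Fintype.card_sum, Fintype.card_finset_len, Fintype.card_finset_len, Fintype.card_fin,
      ← hm1, ← he1, Nat.choose_succ_succ]
  have hcp : (Rj m e).charpoly = (X - C c) ^ ((n - 2).choose (d - 1))
      * X ^ (n.choose d - (n - 2).choose (d - 1)) := by
    rw [charpoly_hermitian hherm,
      ← Finset.prod_filter_mul_prod_filter_not Finset.univ (fun i => hherm.eigenvalues i ≠ 0)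
        (fun i => (X : ℝ[X]) - C (hherm.eigenvalues i))]
    have hval1 : ∀ i ∈ S, ((X : ℝ[X]) - C (hherm.eigenvalues i)) = X - C c := by
      intro i hi
      rcases heig i with h | h
      · exact absurd h (Finset.mem_filter.mp hi).2
      · rw [h]
    have hprod1 : ∏ i ∈ S, ((X : ℝ[X]) - C (hherm.eigenvalues i)) = (X - C c) ^ S.card := by
      rw [Finset.prod_congr rfl hval1, Finset.prod_const]
    have hval2 : ∀ i ∈ Finset.univ.filter (fun i => ¬ hherm.eigenvalues i ≠ 0),
        ((X : ℝ[X]) - C (hherm.eigenvalues i)) = X := by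
      intro i hi
      have h0 : hherm.eigenvalues i = 0 := not_not.mp (Finset.mem_filter.mp hi).2
      rw [h0, map_zero, sub_zero]
    have hcard2 : (Finset.univ.filter (fun i => ¬ hherm.eigenvalues i ≠ 0)).card
        = n.choose d - S.card := by
      have hsplit := Finset.card_filter_add_card_filter_not
        (s := (Finset.univ : Finset _)) (p := fun i => hherm.eigenvalues i ≠ 0)
      rw [Finset.card_univ, hNcard, ← hS] at hsplit
      omega
    have hprod2 : ∏ i ∈ Finset.univ.filter (fun i => ¬ hherm.eigenvalues i ≠ 0),
        ((X : ℝ[X]) - C (hherm.eigenvalues i)) = X ^ (n.choose d - S.card) := by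
      rw [Finset.prod_congr rfl hval2, Finset.prod_const, hcard2]
    rw [← hS, hprod1, hprod2, hScard]
  exact ⟨part1, hpsd, part3, by rw [hrank, hScard], hcp⟩
end

section
/- Let d ≥ 1 and n ≥ d + 1 be integers, and let α = {x₁ < x₂ < ⋯ < x_d} be a d-element subset of {1,…,n}. Define the gap sizes z₀(α) = x₁ − 1, z_i(α) = x_{i+1} − x_i − 1 for 1 ≤ i ≤ d−1, and z_d(α) = n − x_d, and set r(α) = Σ_{ℓ=0}^{⌊(d−1)/2⌋} z_{2ℓ+1}(α). Let k₊(α) be the number of d-element subsets β of {1,…,n} with |α △ β| = 2 and h(α,β) even, and k₋(α) the number with |α △ β| = 2 and h(α,β) odd. Then: if d is odd, k₊(α) = (d+1)(n−d)/2 and k₋(α) = (d−1)(n−d)/2; if d is even, k₊(α) = d(n−d)/2 + r(α) and k₋(α) = d(n−d)/2 − r(α). In particular, k₊ and k₋ are constant over all vertices α if and only if d is odd. -/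
open Matrix Polynomial

/-- The gap size `z_i(α)`: the number of non-elements `y` of `α` having exactly `i`
elements of `α` below them (equivalently, for `α = {x₁ < ⋯ < x_d}`, the number of
non-elements lying strictly between `x_i` and `x_{i+1}`, with the conventions
`z₀` = number below `x₁` and `z_d` = number above `x_d`). -/
def gapZ {n : ℕ} (α : Finset (Fin n)) (i : ℕ) : ℕ :=
  (Finset.univ.filter (fun y : Fin n => y ∉ α ∧ (α.filter (fun x => x < y)).card = i)).card

/-- `r(α) = Σ_{ℓ=0}^{⌊(d−1)/2⌋} z_{2ℓ+1}(α)`. -/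
def rJ {n : ℕ} (d : ℕ) (α : Finset (Fin n)) : ℕ :=
  ∑ l ∈ Finset.range ((d - 1) / 2 + 1), gapZ α (2 * l + 1)

/-- `k₊(α)`: the number of `d`-subsets `β` with `|α ∆ β| = 2` and `h(α,β)` even
(the positive degree of `α` in the signed Johnson graph). -/
def kplus (n d : ℕ) (α : {s : Finset (Fin n) // s.card = d}) : ℕ :=
  (Finset.univ.filter (fun β : {s : Finset (Fin n) // s.card = d} =>
    (symmDiff α.1 β.1).card = 2 ∧ Even (hjExp α.1 β.1))).card

/-- `k₋(α)`: the number of `d`-subsets `β` with `|α ∆ β| = 2` and `h(α,β)` odd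
(the negative degree of `α` in the signed Johnson graph). -/
def kminus (n d : ℕ) (α : {s : Finset (Fin n) // s.card = d}) : ℕ :=
  (Finset.univ.filter (fun β : {s : Finset (Fin n) // s.card = d} =>
    (symmDiff α.1 β.1).card = 2 ∧ Odd (hjExp α.1 β.1))).card

open Finset

namespace Stmt12Aux

variable {n : ℕ}





/-- position of `y` relative to `α` -/
def cpos (α : Finset (Fin n)) (y : Fin n) : ℕ := (α.filter (fun x => x < y)).card

def Hxy (α : Finset (Fin n)) (x y : Fin n) : ℕ :=
  ((α.erase x).filter (fun l => min x y < l ∧ l < max x y)).card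

lemma cpos_le (α : Finset (Fin n)) (y : Fin n) : cpos α y ≤ α.card :=
  Finset.card_filter_le _ _

lemma cpos_lt_of_mem {α : Finset (Fin n)} {x : Fin n} (hx : x ∈ α) :
    cpos α x < α.card := by
  have hsub : α.filter (fun l => l < x) ⊆ α.erase x := by
    intro l hl
    simp only [mem_filter] at hl
    exact Finset.mem_erase.2 ⟨ne_of_lt hl.2, hl.1⟩
  calc cpos α x ≤ (α.erase x).card := Finset.card_le_card hsub
    _ < α.card := by
        rw [Finset.card_erase_of_mem hx]
        have : 1 ≤ α.card := Finset.card_pos.2 ⟨x, hx⟩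
        omega

lemma cpos_strict {α : Finset (Fin n)} {x y : Fin n} (hx : x ∈ α) (hxy : x < y) :
    cpos α x < cpos α y := by
  have hsub : insert x (α.filter (fun l => l < x)) ⊆ α.filter (fun l => l < y) := by
    intro l hl
    rcases Finset.mem_insert.1 hl with rfl | hl
    · exact Finset.mem_filter.2 ⟨hx, hxy⟩
    · simp only [mem_filter] at hl ⊢
      exact ⟨hl.1, lt_trans hl.2 hxy⟩
  have := Finset.card_le_card hsub
  rw [Finset.card_insert_of_notMem (by simp)] at this
  simpa [cpos] using this

lemma cpos_mono (α : Finset (Fin n)) {x y : Fin n} (hxy : y ≤ x) :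
    cpos α y ≤ cpos α x := by
  apply Finset.card_le_card
  intro l hl
  simp only [mem_filter] at hl ⊢
  exact ⟨hl.1, lt_of_lt_of_le hl.2 hxy⟩

lemma cpos_lt_iff {α : Finset (Fin n)} {x y : Fin n} (hx : x ∈ α) (hy : y ∉ α) :
    cpos α x < cpos α y ↔ x < y := by
  constructor
  · intro h
    by_contra hxy
    push_neg at hxy
    exact absurd (cpos_mono α hxy) (by omega)
  · exact cpos_strict hx

lemma image_cpos {α : Finset (Fin n)} :
    α.image (cpos α) = Finset.range α.card := by
  have hinj : Set.InjOn (cpos α) α := by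
    intro x hx y hy hxy
    by_contra hne
    rcases lt_or_gt_of_ne (show x ≠ y from fun h => hne (by simp [h])) with h | h
    · exact absurd hxy (ne_of_lt (cpos_strict hx h))
    · exact absurd hxy.symm (ne_of_lt (cpos_strict hy h))
  apply Finset.eq_of_subset_of_card_le
  · intro k hk
    simp only [Finset.mem_image] at hk
    obtain ⟨x, hx, rfl⟩ := hk
    exact Finset.mem_range.2 (cpos_lt_of_mem hx)
  · rw [Finset.card_range, Finset.card_image_of_injOn hinj]

lemma count_transport (α : Finset (Fin n)) (P : ℕ → Prop) [DecidablePred P] :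
    (α.filter (fun x => P (cpos α x))).card = ((Finset.range α.card).filter P).card := by
  have hinj : Set.InjOn (cpos α) (α.filter (fun x => P (cpos α x))) := by
    intro x hx y hy hxy
    simp only [coe_filter, Set.mem_setOf_eq] at hx hy
    by_contra hne
    rcases lt_or_gt_of_ne (show x ≠ y from fun h => hne (by simp [h])) with h | h
    · exact absurd hxy (ne_of_lt (cpos_strict hx.1 h))
    · exact absurd hxy.symm (ne_of_lt (cpos_strict hy.1 h))
  rw [← image_cpos (α := α), Finset.filter_image,
    Finset.card_image_of_injOn hinj]


lemma card_range_mod (m r : ℕ) (hr : r < 2) :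
    ((Finset.range m).filter (fun k => k % 2 = r)).card
      = if r = 0 then (m + 1) / 2 else m / 2 := by
  induction m with
  | zero => simp
  | succ m ih =>
    rw [Finset.range_add_one, Finset.filter_insert]
    by_cases h : m % 2 = r
    · rw [if_pos h, Finset.card_insert_of_notMem (by simp)]
      rw [ih]
      split <;> omega
    · rw [if_neg h, ih]
      split <;> omega

lemma card_Ico_parity (i d : ℕ) :
    ((Finset.Ico i d).filter (fun k => k % 2 = i % 2)).card = (d - i + 1) / 2 := by
  rcases le_or_gt i d with h | h
  · have himg : Finset.Ico i d = (Finset.range (d - i)).image (fun k => k + i) := by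
      ext k
      simp only [Finset.mem_Ico, Finset.mem_image, Finset.mem_range]
      constructor
      · intro hk; exact ⟨k - i, by omega, by omega⟩
      · rintro ⟨m, hm, rfl⟩; omega
    rw [himg, Finset.filter_image, Finset.card_image_of_injective _ (add_left_injective i)]
    have heq : (Finset.range (d - i)).filter (fun a => (a + i) % 2 = i % 2)
        = (Finset.range (d - i)).filter (fun k => k % 2 = 0) :=
      Finset.filter_congr (fun k _ => by omega)
    rw [heq, card_range_mod (d - i) 0 (by omega)]
    simp
  · rw [Finset.Ico_eq_empty (by omega), Finset.filter_empty, Finset.card_empty]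
    omega

lemma key_count (d i : ℕ) (h : i ≤ d) :
    ((Finset.range d).filter
      (fun k => (k < i ∧ (k + i) % 2 = 1) ∨ (i ≤ k ∧ (k + i) % 2 = 0))).card
      = (i + 1) / 2 + (d - i + 1) / 2 := by
  have hsplit : Finset.range d = Finset.range i ∪ Finset.Ico i d := by
    rw [Finset.range_eq_Ico, Finset.range_eq_Ico]
    exact (Finset.Ico_union_Ico_eq_Ico (Nat.zero_le i) h).symm
  rw [hsplit, Finset.filter_union, Finset.card_union_of_disjoint]
  · have h1 : (Finset.range i).filter
        (fun k => (k < i ∧ (k + i) % 2 = 1) ∨ (i ≤ k ∧ (k + i) % 2 = 0))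
        = (Finset.range i).filter (fun k => k % 2 = (i + 1) % 2) :=
      Finset.filter_congr (fun k hk => by
        simp only [Finset.mem_range] at hk
        omega)
    have h2 : (Finset.Ico i d).filter
        (fun k => (k < i ∧ (k + i) % 2 = 1) ∨ (i ≤ k ∧ (k + i) % 2 = 0))
        = (Finset.Ico i d).filter (fun k => k % 2 = i % 2) :=
      Finset.filter_congr (fun k hk => by
        simp only [Finset.mem_Ico] at hk
        omega)
    rw [h1, h2, card_Ico_parity, card_range_mod i ((i + 1) % 2) (by omega)]
    split <;> omega
  · apply Finset.disjoint_filter_filter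
    rw [Finset.range_eq_Ico]
    exact Finset.Ico_disjoint_Ico_consecutive 0 i d




lemma Hxy_eq {α : Finset (Fin n)} {x y : Fin n} (hx : x ∈ α) (hy : y ∉ α) :
    Hxy α x y = if x < y then cpos α y - cpos α x - 1 else cpos α x - cpos α y := by
  rcases lt_trichotomy x y with hxy | rfl | hxy
  · rw [if_pos hxy]
    have hmin : min x y = x := min_eq_left hxy.le
    have hmax : max x y = y := max_eq_right hxy.le
    have hset : (α.erase x).filter (fun l => min x y < l ∧ l < max x y)
        = (α.filter (fun l => l < y)) \ (insert x (α.filter (fun l => l < x))) := by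
      ext l
      simp only [hmin, hmax, Finset.mem_filter, Finset.mem_erase, Finset.mem_sdiff,
        Finset.mem_insert, not_or]
      constructor
      · rintro ⟨⟨hlx, hlα⟩, h1, h2⟩
        exact ⟨⟨hlα, h2⟩, hlx, fun h => absurd h.2 (not_lt.2 h1.le)⟩
      · rintro ⟨⟨hlα, h2⟩, hlx, h3⟩
        refine ⟨⟨hlx, hlα⟩, ?_, h2⟩
        rcases lt_trichotomy x l with h | rfl | h
        · exact h
        · exact absurd rfl hlx
        · exact absurd ⟨hlα, h⟩ h3
    have hsub : insert x (α.filter (fun l => l < x)) ⊆ α.filter (fun l => l < y) := by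
      intro l hl
      rcases Finset.mem_insert.1 hl with rfl | hl
      · exact Finset.mem_filter.2 ⟨hx, hxy⟩
      · simp only [Finset.mem_filter] at hl ⊢
        exact ⟨hl.1, lt_trans hl.2 hxy⟩
    rw [Hxy, hset, Finset.card_sdiff_of_subset hsub,
      Finset.card_insert_of_notMem (by simp)]
    rfl
  · exact absurd hx hy
  · rw [if_neg (not_lt.2 hxy.le)]
    have hmin : min x y = y := min_eq_right hxy.le
    have hmax : max x y = x := max_eq_left hxy.le
    have hset : (α.erase x).filter (fun l => min x y < l ∧ l < max x y)
        = (α.filter (fun l => l < x)) \ (α.filter (fun l => l < y)) := by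
      ext l
      simp only [hmin, hmax, Finset.mem_filter, Finset.mem_erase, Finset.mem_sdiff, not_and]
      constructor
      · rintro ⟨⟨hlx, hlα⟩, h1, h2⟩
        exact ⟨⟨hlα, h2⟩, fun _ h => absurd h (not_lt.2 h1.le)⟩
      · rintro ⟨⟨hlα, h2⟩, h3⟩
        have hyl : y < l := by
          rcases lt_trichotomy y l with h | rfl | h
          · exact h
          · exact absurd hlα hy
          · exact absurd h (h3 hlα)
        exact ⟨⟨ne_of_lt h2, hlα⟩, hyl, h2⟩
    rw [Hxy, hset, Finset.card_sdiff_of_subset]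
    · rfl
    · intro l hl
      simp only [Finset.mem_filter] at hl ⊢
      exact ⟨hl.1, lt_trans hl.2 hxy⟩





lemma sdiff_insert_erase {α : Finset (Fin n)} {x y : Fin n} (hx : x ∈ α) (hy : y ∉ α) :
    α \ (insert y (α.erase x)) = {x} ∧ (insert y (α.erase x)) \ α = {y} := by
  constructor
  · ext l
    simp only [Finset.mem_sdiff, Finset.mem_insert, Finset.mem_erase, Finset.mem_singleton,
      not_or, not_and]
    constructor
    · rintro ⟨hlα, hly, h⟩
      by_contra hne
      exact (h hne) hlα
    · rintro rfl
      exact ⟨hx, fun h => hy (h ▸ hx), fun h => absurd rfl h⟩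
  · ext l
    simp only [Finset.mem_sdiff, Finset.mem_insert, Finset.mem_erase, Finset.mem_singleton]
    constructor
    · rintro ⟨rfl | ⟨_, hlα⟩, hl⟩
      · rfl
      · exact absurd hlα hl
    · rintro rfl
      exact ⟨Or.inl rfl, hy⟩

lemma symmDiff_insert_erase {α : Finset (Fin n)} {x y : Fin n} (hx : x ∈ α) (hy : y ∉ α) :
    symmDiff α (insert y (α.erase x)) = {x, y} := by
  obtain ⟨h1, h2⟩ := sdiff_insert_erase hx hy
  rw [symmDiff_def, h1, h2]
  rfl

lemma card_symmDiff_insert_erase {α : Finset (Fin n)} {x y : Fin n} (hx : x ∈ α) (hy : y ∉ α) :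
    (symmDiff α (insert y (α.erase x))).card = 2 := by
  rw [symmDiff_insert_erase hx hy]
  rw [Finset.card_insert_of_notMem (by simp; rintro rfl; exact hy hx), Finset.card_singleton]

lemma card_insert_erase {α : Finset (Fin n)} {x y : Fin n} (hx : x ∈ α) (hy : y ∉ α) :
    (insert y (α.erase x)).card = α.card := by
  rw [Finset.card_insert_of_notMem (fun h => hy (Finset.mem_of_mem_erase h)),
    Finset.card_erase_of_mem hx]
  have : 1 ≤ α.card := Finset.card_pos.2 ⟨x, hx⟩
  omega

lemma hjExp_insert_erase {α : Finset (Fin n)} {x y : Fin n} (hx : x ∈ α) (hy : y ∉ α) :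
    hjExp α (insert y (α.erase x)) = Hxy α x y := by
  have hinter : α ∩ (insert y (α.erase x)) = α.erase x := by
    ext l
    simp only [Finset.mem_inter, Finset.mem_insert, Finset.mem_erase]
    constructor
    · rintro ⟨hlα, rfl | h⟩
      · exact absurd hlα hy
      · exact h
    · rintro ⟨hlx, hlα⟩
      exact ⟨hlα, Or.inr ⟨hlx, hlα⟩⟩
  rw [hjExp, hinter, symmDiff_insert_erase hx hy, Hxy]
  congr 1
  apply Finset.filter_congr
  intro l hl
  simp only [Finset.mem_erase] at hl
  simp only [Finset.mem_insert, Finset.mem_singleton]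
  constructor
  · rintro ⟨⟨i, hi, hil⟩, ⟨j, hj, hlj⟩⟩
    constructor
    · rcases hi with rfl | rfl
      · exact lt_of_le_of_lt (min_le_left _ _) hil
      · exact lt_of_le_of_lt (min_le_right _ _) hil
    · rcases hj with rfl | rfl
      · exact lt_of_lt_of_le hlj (le_max_left _ _)
      · exact lt_of_lt_of_le hlj (le_max_right _ _)
  · rintro ⟨h1, h2⟩
    constructor
    · rcases min_lt_iff.1 h1 with h | h
      · exact ⟨x, Or.inl rfl, h⟩
      · exact ⟨y, Or.inr rfl, h⟩
    · rcases lt_max_iff.1 h2 with h | h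
      · exact ⟨x, Or.inl rfl, h⟩
      · exact ⟨y, Or.inr rfl, h⟩

lemma sdiff_cards {α β : Finset (Fin n)} (hcard : α.card = β.card)
    (h2 : (symmDiff α β).card = 2) : (α \ β).card = 1 ∧ (β \ α).card = 1 := by
  have hd : Disjoint (α \ β) (β \ α) := disjoint_sdiff_sdiff
  have hu : (α \ β) ∪ (β \ α) = symmDiff α β := (symmDiff_def α β).symm
  have hsum : (α \ β).card + (β \ α).card = 2 := by
    rw [← Finset.card_union_of_disjoint hd, hu, h2]
  have e1 := Finset.card_sdiff_add_card_inter α β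
  have e2 := Finset.card_sdiff_add_card_inter β α
  rw [Finset.inter_comm] at e2
  omega

lemma eq_insert_erase {α β : Finset (Fin n)} {x y : Fin n}
    (h1 : α \ β = {x}) (h2 : β \ α = {y}) : β = insert y (α.erase x) := by
  have hx : ∀ l, l ∈ α ∧ l ∉ β ↔ l = x := by
    intro l
    rw [← Finset.mem_singleton, ← h1, Finset.mem_sdiff]
  have hy : ∀ l, l ∈ β ∧ l ∉ α ↔ l = y := by
    intro l
    rw [← Finset.mem_singleton, ← h2, Finset.mem_sdiff]
  have hxα : x ∈ α ∧ x ∉ β := (hx x).2 rfl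
  have hyβ : y ∈ β ∧ y ∉ α := (hy y).2 rfl
  ext l
  simp only [Finset.mem_insert, Finset.mem_erase]
  constructor
  · intro hlβ
    by_cases hlα : l ∈ α
    · right
      refine ⟨fun h => hxα.2 (h ▸ hlβ), hlα⟩
    · left
      exact (hy l).1 ⟨hlβ, hlα⟩
  · rintro (rfl | ⟨hlx, hlα⟩)
    · exact hyβ.1
    · by_contra hlβ
      exact hlx ((hx l).1 ⟨hlα, hlβ⟩)

lemma card_adj (n d : ℕ) (α : {s : Finset (Fin n) // s.card = d})
    (Q : ℕ → Prop) [DecidablePred Q] :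
    (Finset.univ.filter (fun β : {s : Finset (Fin n) // s.card = d} =>
      (symmDiff α.1 β.1).card = 2 ∧ Q (hjExp α.1 β.1))).card
    = ((α.1 ×ˢ α.1ᶜ).filter (fun p => Q (Hxy α.1 p.1 p.2))).card := by
  apply (Finset.card_bij
    (i := fun (p : Fin n × Fin n) (hp : p ∈ (α.1 ×ˢ α.1ᶜ).filter
        (fun p => Q (Hxy α.1 p.1 p.2))) =>
      (⟨insert p.2 (α.1.erase p.1), by
        simp only [Finset.mem_filter, Finset.mem_product, Finset.mem_compl] at hp
        rw [card_insert_erase hp.1.1 hp.1.2, α.2]⟩ : {s : Finset (Fin n) // s.card = d}))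
    ?_ ?_ ?_).symm
  · intro p hp
    simp only [Finset.mem_filter, Finset.mem_product, Finset.mem_compl] at hp
    obtain ⟨⟨hx, hy⟩, hQ⟩ := hp
    simp only [Finset.mem_filter, Finset.mem_univ, true_and]
    exact ⟨card_symmDiff_insert_erase hx hy, by rwa [hjExp_insert_erase hx hy]⟩
  · intro p hp q hq heq
    simp only [Finset.mem_filter, Finset.mem_product, Finset.mem_compl] at hp hq
    have heq' : insert p.2 (α.1.erase p.1) = insert q.2 (α.1.erase q.1) :=
      congrArg Subtype.val heq
    have e1 := (sdiff_insert_erase hp.1.1 hp.1.2).1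
    have e2 := (sdiff_insert_erase hp.1.1 hp.1.2).2
    have e3 := (sdiff_insert_erase hq.1.1 hq.1.2).1
    have e4 := (sdiff_insert_erase hq.1.1 hq.1.2).2
    rw [heq'] at e1 e2
    have : ({p.1} : Finset (Fin n)) = {q.1} := by rw [← e1, ← e3]
    have h1 : p.1 = q.1 := Finset.singleton_injective this
    have : ({p.2} : Finset (Fin n)) = {q.2} := by rw [← e2, ← e4]
    have h2 : p.2 = q.2 := Finset.singleton_injective this
    exact Prod.ext h1 h2
  · intro β hβ
    simp only [Finset.mem_filter, Finset.mem_univ, true_and] at hβ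
    obtain ⟨h2, hQ⟩ := hβ
    obtain ⟨hc1, hc2⟩ := sdiff_cards (by rw [α.2, β.2]) h2
    obtain ⟨x, hxe⟩ := Finset.card_eq_one.1 hc1
    obtain ⟨y, hye⟩ := Finset.card_eq_one.1 hc2
    have hx : x ∈ α.1 ∧ x ∉ β.1 := by
      rw [← Finset.mem_sdiff, hxe]; exact Finset.mem_singleton_self x
    have hy : y ∈ β.1 ∧ y ∉ α.1 := by
      rw [← Finset.mem_sdiff, hye]; exact Finset.mem_singleton_self y
    have hβeq : β.1 = insert y (α.1.erase x) := eq_insert_erase hxe hye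
    refine ⟨(x, y), ?_, ?_⟩
    · simp only [Finset.mem_filter, Finset.mem_product, Finset.mem_compl]
      refine ⟨⟨hx.1, hy.2⟩, ?_⟩
      rw [← hjExp_insert_erase hx.1 hy.2, ← hβeq]
      exact hQ
    · exact Subtype.ext hβeq.symm

lemma card_product_filter {X Y : Type*} [DecidableEq X] [DecidableEq Y]
    (s : Finset X) (t : Finset Y) (P : X → Y → Prop) [∀ x y, Decidable (P x y)] :
    ((s ×ˢ t).filter (fun p => P p.1 p.2)).card
      = ∑ y ∈ t, (s.filter (fun x => P x y)).card := by
  rw [Finset.card_filter, Finset.sum_product, Finset.sum_comm]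
  congr 1
  funext y
  rw [Finset.card_filter]

lemma per_y_even {d : ℕ} {α : Finset (Fin n)} (hα : α.card = d) {y : Fin n} (hy : y ∉ α) :
    (α.filter (fun x => Even (Hxy α x y))).card
      = (cpos α y + 1) / 2 + (d - cpos α y + 1) / 2 := by
  have h1 : α.filter (fun x => Even (Hxy α x y)) = α.filter (fun x =>
      (cpos α x < cpos α y ∧ (cpos α x + cpos α y) % 2 = 1) ∨
      (cpos α y ≤ cpos α x ∧ (cpos α x + cpos α y) % 2 = 0)) := by
    apply Finset.filter_congr
    intro x hx
    rw [Hxy_eq hx hy]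
    have hiff := cpos_lt_iff hx hy
    by_cases hxy : x < y
    · rw [if_pos hxy, Nat.even_iff]
      have hc := hiff.2 hxy
      omega
    · rw [if_neg hxy, Nat.even_iff]
      have hc : ¬ cpos α x < cpos α y := fun h => hxy (hiff.1 h)
      omega
  rw [h1, count_transport α (fun k =>
      (k < cpos α y ∧ (k + cpos α y) % 2 = 1) ∨
      (cpos α y ≤ k ∧ (k + cpos α y) % 2 = 0)), hα,
    key_count d (cpos α y) (hα ▸ cpos_le α y)]

lemma per_y_odd {d : ℕ} {α : Finset (Fin n)} (hα : α.card = d) {y : Fin n} (hy : y ∉ α) :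
    (α.filter (fun x => Odd (Hxy α x y))).card
      = d - ((cpos α y + 1) / 2 + (d - cpos α y + 1) / 2) := by
  have hsplit := Finset.card_filter_add_card_filter_not
    (s := α) (p := fun x => Even (Hxy α x y))
  have hodd : α.filter (fun x => ¬ Even (Hxy α x y))
      = α.filter (fun x => Odd (Hxy α x y)) :=
    Finset.filter_congr (fun x _ => by rw [← Nat.not_even_iff_odd])
  rw [per_y_even hα hy, hodd] at hsplit
  omega

lemma kplus_sum (n d : ℕ) (α : {s : Finset (Fin n) // s.card = d}) :
    kplus n d α = ∑ y ∈ α.1ᶜ, ((cpos α.1 y + 1) / 2 + (d - cpos α.1 y + 1) / 2) := by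
  rw [kplus, card_adj n d α Even,
    card_product_filter α.1 α.1ᶜ (fun x y => Even (Hxy α.1 x y))]
  apply Finset.sum_congr rfl
  intro y hy
  exact per_y_even α.2 (Finset.mem_compl.1 hy)

lemma kminus_sum (n d : ℕ) (α : {s : Finset (Fin n) // s.card = d}) :
    kminus n d α
      = ∑ y ∈ α.1ᶜ, (d - ((cpos α.1 y + 1) / 2 + (d - cpos α.1 y + 1) / 2)) := by
  rw [kminus, card_adj n d α Odd,
    card_product_filter α.1 α.1ᶜ (fun x y => Odd (Hxy α.1 x y))]
  apply Finset.sum_congr rfl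
  intro y hy
  exact per_y_odd α.2 (Finset.mem_compl.1 hy)

lemma card_compl_eq {d : ℕ} (α : {s : Finset (Fin n) // s.card = d}) :
    (α.1ᶜ).card = n - d := by
  rw [Finset.card_compl, α.2, Fintype.card_fin]

lemma rJ_eq_count {d : ℕ} (hd2 : d % 2 = 0) {α : Finset (Fin n)} (hα : α.card = d) :
    rJ d α = (Finset.univ.filter (fun y : Fin n => y ∉ α ∧ cpos α y % 2 = 1)).card := by
  rw [Finset.card_eq_sum_card_fiberwise
    (f := fun y => cpos α y / 2) (t := Finset.range ((d - 1) / 2 + 1))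
    (fun y hy => by
      have hy := Finset.mem_coe.1 hy
      simp only [Finset.mem_filter] at hy
      have h1 : cpos α y ≤ d := hα ▸ cpos_le α y
      simp only [Finset.mem_coe, Finset.mem_range]
      omega)]
  rw [rJ]
  apply Finset.sum_congr rfl
  intro l _
  rw [gapZ]
  congr 1
  ext y
  simp only [Finset.mem_filter, Finset.mem_univ, true_and]
  constructor
  · rintro ⟨h1, h2⟩
    change cpos α y = 2 * l + 1 at h2
    exact ⟨⟨h1, by omega⟩, by omega⟩
  · rintro ⟨⟨h1, h2⟩, h3⟩
    refine ⟨h1, ?_⟩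
    change cpos α y = 2 * l + 1
    omega

end Stmt12Aux

/-- For `d ≥ 1`, `n ≥ d + 1` and any vertex `α` of `J(n,d)`:
if `d` is odd then `k₊(α) = (d+1)(n−d)/2` and `k₋(α) = (d−1)(n−d)/2`; if `d` is even then
`k₊(α) = d(n−d)/2 + r(α)` and `k₋(α) = d(n−d)/2 − r(α)`.  In particular `k₊` and `k₋` are
constant over all vertices if and only if `d` is odd. -/


theorem stmt_12 (n d : ℕ) (hd : 1 ≤ d) (hn : d + 1 ≤ n) :
    (Odd d → ∀ α : {s : Finset (Fin n) // s.card = d},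
      kplus n d α = (d + 1) * (n - d) / 2 ∧ kminus n d α = (d - 1) * (n - d) / 2) ∧
    (Even d → ∀ α : {s : Finset (Fin n) // s.card = d},
      kplus n d α = d * (n - d) / 2 + rJ d α.1 ∧ kminus n d α = d * (n - d) / 2 - rJ d α.1) ∧
    ((∀ α β : {s : Finset (Fin n) // s.card = d},
      kplus n d α = kplus n d β ∧ kminus n d α = kminus n d β) ↔ Odd d) := by
  classical
  have hOdd : Odd d → ∀ α : {s : Finset (Fin n) // s.card = d},
      kplus n d α = (d + 1) * (n - d) / 2 ∧ kminus n d α = (d - 1) * (n - d) / 2 := by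
    rintro ⟨k, hk⟩ α
    have hle : ∀ y : Fin n, Stmt12Aux.cpos α.1 y ≤ d := by
      intro y
      have h := Stmt12Aux.cpos_le α.1 y
      rw [α.2] at h
      exact h
    constructor
    · rw [Stmt12Aux.kplus_sum n d α,
        Finset.sum_congr rfl (fun y _ => show
          (Stmt12Aux.cpos α.1 y + 1) / 2 + (d - Stmt12Aux.cpos α.1 y + 1) / 2 = k + 1 by
          have := hle y; omega),
        Finset.sum_const, Stmt12Aux.card_compl_eq α, smul_eq_mul]
      have h2 : (d + 1) * (n - d) = 2 * ((n - d) * (k + 1)) := by rw [hk]; ring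
      rw [h2, Nat.mul_div_cancel_left _ (by norm_num)]
    · rw [Stmt12Aux.kminus_sum n d α,
        Finset.sum_congr rfl (fun y _ => show
          d - ((Stmt12Aux.cpos α.1 y + 1) / 2 + (d - Stmt12Aux.cpos α.1 y + 1) / 2) = k by
          have := hle y; omega),
        Finset.sum_const, Stmt12Aux.card_compl_eq α, smul_eq_mul]
      have h2 : (d - 1) * (n - d) = 2 * ((n - d) * k) := by
        have : d - 1 = 2 * k := by omega
        rw [this]; ring
      rw [h2, Nat.mul_div_cancel_left _ (by norm_num)]
  have hEven : Even d → ∀ α : {s : Finset (Fin n) // s.card = d},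
      kplus n d α = d * (n - d) / 2 + rJ d α.1 ∧
      kminus n d α = d * (n - d) / 2 - rJ d α.1 := by
    rintro ⟨k, hk⟩ α
    have hk1 : 1 ≤ k := by omega
    have hle : ∀ y : Fin n, Stmt12Aux.cpos α.1 y ≤ d := by
      intro y
      have h := Stmt12Aux.cpos_le α.1 y
      rw [α.2] at h
      exact h
    have hdd : d * (n - d) / 2 = (n - d) * k := by
      have h2 : d * (n - d) = 2 * ((n - d) * k) := by rw [hk]; ring
      rw [h2, Nat.mul_div_cancel_left _ (by norm_num)]
    have hrJ : rJ d α.1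
        = ∑ y ∈ α.1ᶜ, (if Stmt12Aux.cpos α.1 y % 2 = 1 then 1 else 0) := by
      rw [Stmt12Aux.rJ_eq_count (by omega) α.2]
      have hset : Finset.univ.filter
            (fun y : Fin n => y ∉ α.1 ∧ Stmt12Aux.cpos α.1 y % 2 = 1)
          = α.1ᶜ.filter (fun y => Stmt12Aux.cpos α.1 y % 2 = 1) := by
        ext y
        simp [Finset.mem_compl]
      rw [hset, Finset.card_filter]
    have hksum : kplus n d α = ∑ y ∈ α.1ᶜ,
        (k + if Stmt12Aux.cpos α.1 y % 2 = 1 then 1 else 0) := by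
      rw [Stmt12Aux.kplus_sum n d α]
      exact Finset.sum_congr rfl (fun y _ => by
        have := hle y
        split <;> omega)
    have hkplus : kplus n d α = (n - d) * k + rJ d α.1 := by
      rw [hksum, Finset.sum_add_distrib, Finset.sum_const,
        Stmt12Aux.card_compl_eq α, smul_eq_mul, hrJ]
    constructor
    · rw [hkplus, hdd]
    · have hmsum : kminus n d α = ∑ y ∈ α.1ᶜ,
          (k - if Stmt12Aux.cpos α.1 y % 2 = 1 then 1 else 0) := by
        rw [Stmt12Aux.kminus_sum n d α]
        exact Finset.sum_congr rfl (fun y _ => by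
          have := hle y
          split <;> omega)
      have hadd : kminus n d α + rJ d α.1 = (n - d) * k := by
        rw [hmsum, hrJ, ← Finset.sum_add_distrib, ← smul_eq_mul,
          ← Stmt12Aux.card_compl_eq α, ← Finset.sum_const]
        exact Finset.sum_congr rfl (fun y _ => by split <;> omega)
      rw [hdd]
      omega
  refine ⟨hOdd, hEven, ?_, fun hodd α β => by
    rw [(hOdd hodd α).1, (hOdd hodd α).2, (hOdd hodd β).1, (hOdd hodd β).2]
    exact ⟨rfl, rfl⟩⟩
  intro hconst
  by_contra hodd
  have heven : Even d := Nat.not_odd_iff_even.1 hodd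
  have hd2 : d % 2 = 0 := Nat.even_iff.1 heven
  have hdge2 : 2 ≤ d := by omega
  -- construct α0 = {0, ..., d-1}
  have hb0 : ∀ m ∈ Finset.range d, m < n := fun m hm => by
    simp only [Finset.mem_range] at hm; omega
  set A0 : Finset (Fin n) := (Finset.range d).attachFin hb0 with hA0
  have hA0card : A0.card = d := by
    rw [hA0, Finset.card_attachFin, Finset.card_range]
  -- construct α1 = {0, ..., d-2, d}
  have hb1 : ∀ m ∈ insert d (Finset.range (d - 1)), m < n := fun m hm => by
    simp only [Finset.mem_insert, Finset.mem_range] at hm; omega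
  set A1 : Finset (Fin n) := (insert d (Finset.range (d - 1))).attachFin hb1 with hA1
  have hA1card : A1.card = d := by
    rw [hA1, Finset.card_attachFin, Finset.card_insert_of_notMem (by simp),
      Finset.card_range]
    omega
  have hmem0 : ∀ y : Fin n, y ∈ A0 ↔ (y : ℕ) < d := by
    intro y; rw [hA0, Finset.mem_attachFin, Finset.mem_range]
  have hmem1 : ∀ y : Fin n, y ∈ A1 ↔ (y : ℕ) = d ∨ (y : ℕ) < d - 1 := by
    intro y; rw [hA1, Finset.mem_attachFin, Finset.mem_insert, Finset.mem_range]
  -- rJ of A0 is 0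
  have hrJ0 : rJ d A0 = 0 := by
    rw [rJ]
    apply Finset.sum_eq_zero
    intro l hl
    simp only [Finset.mem_range] at hl
    rw [gapZ, Finset.card_eq_zero, Finset.filter_eq_empty_iff]
    intro y _
    rintro ⟨hy, hcy⟩
    have hyd : d ≤ (y : ℕ) := by
      by_contra h
      exact hy ((hmem0 y).2 (by omega))
    have hfull : A0.filter (fun x => x < y) = A0 := by
      apply Finset.filter_true_of_mem
      intro x hx
      have := (hmem0 x).1 hx
      exact Fin.lt_def.2 (by omega)
    rw [hfull, hA0card] at hcy
    omega
  -- rJ of A1 is positive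
  have hrJ1 : 1 ≤ rJ d A1 := by
    have hy0lt : d - 1 < n := by omega
    set y0 : Fin n := ⟨d - 1, hy0lt⟩ with hy0
    have hy0notmem : y0 ∉ A1 := by
      rw [hmem1]
      push_neg
      constructor <;> simp [hy0] <;> omega
    have hcy0 : Stmt12Aux.cpos A1 y0 = d - 1 := by
      have hfil : A1.filter (fun x => x < y0) = (Finset.range (d - 1)).attachFin
          (fun m hm => by simp only [Finset.mem_range] at hm; omega) := by
        ext x
        simp only [Finset.mem_filter, Finset.mem_attachFin, Finset.mem_range]
        rw [hmem1]
        constructor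
        · rintro ⟨h1 | h1, h2⟩
          · rw [Fin.lt_def] at h2
            simp only [hy0] at h2
            omega
          · exact h1
        · intro hx
          refine ⟨Or.inr hx, ?_⟩
          rw [Fin.lt_def]
          simp only [hy0]
          omega
      rw [Stmt12Aux.cpos, hfil, Finset.card_attachFin, Finset.card_range]
    have hgap : 1 ≤ gapZ A1 (d - 1) := by
      rw [gapZ, Nat.one_le_iff_ne_zero, ← Nat.pos_iff_ne_zero, Finset.card_pos]
      exact ⟨y0, Finset.mem_filter.2 ⟨Finset.mem_univ _, hy0notmem, hcy0⟩⟩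
    calc 1 ≤ gapZ A1 (d - 1) := hgap
      _ = gapZ A1 (2 * ((d - 2) / 2) + 1) := by congr 1; omega
      _ ≤ rJ d A1 := by
        rw [rJ]
        apply Finset.single_le_sum (f := fun l => gapZ A1 (2 * l + 1))
          (fun l _ => Nat.zero_le _)
        rw [Finset.mem_range]
        omega
  -- contradiction
  have h0 := (hEven heven ⟨A0, hA0card⟩).1
  have h1 := (hEven heven ⟨A1, hA1card⟩).1
  have hc := (hconst ⟨A0, hA0card⟩ ⟨A1, hA1card⟩).1
  rw [h0, h1] at hc
  simp only at hc
  rw [hrJ0] at hc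
  omega
end
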